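/- Let n ≥ 2, ρ ∈ (0,1), and define the vector y[S] = 1 - |S|ρ/(n-k+kρ) for S ⊆ [n], where k ∈ {1,...,n-1} is fixed. Then the Möbius transform u[S] = Σ_{T ⊇ S} (-1)^{|T\S|} y[T] satisfies u[S] = 0 if |S| ≤ n-2, u[S] = ρ/(n-k+kρ) if |S| = n-1, and u[[n]] = 1 - nρ/(n-k+kρ); consequently u ≥ 0 and the moment matrix M_n(y) is positive semidefinite. -/

import Mathlib

open Finset

lemma aux_alt {α : Type*} [DecidableEq α] (s : Finset α) :
    ∑ A ∈ s.powerset, (-1 : ℝ) ^ A.card = if s = ∅ then 1 else 0 := by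
  split_ifs with hs
  · subst hs; simp
  · have h := Finset.sum_powerset_neg_one_pow_card_of_nonempty
      (Finset.nonempty_iff_ne_empty.2 hs) (x := s)
    exact_mod_cast h

lemma aux_alt_card {α : Type*} [DecidableEq α] (s : Finset α) :
    ∑ A ∈ s.powerset, (-1 : ℝ) ^ A.card * A.card = if s.card = 1 then -1 else 0 := by
  induction s using Finset.induction with
  | empty => simp
  | @insert a s ha ih =>
    rw [Finset.sum_powerset_insert ha]
    have h2 : ∑ A ∈ s.powerset, (-1 : ℝ) ^ (insert a A).card * (insert a A).card
        = ∑ A ∈ s.powerset, (-1 : ℝ) ^ (A.card + 1) * (A.card + 1) := by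
      refine Finset.sum_congr rfl fun A hA => ?_
      rw [Finset.mem_powerset] at hA
      have haA : a ∉ A := fun h => ha (hA h)
      rw [Finset.card_insert_of_notMem haA]
      push_cast; ring_nf
    have h3 : ∑ A ∈ s.powerset, (-1 : ℝ) ^ (A.card + 1) * (A.card + 1)
        = -(∑ A ∈ s.powerset, (-1 : ℝ) ^ A.card * A.card)
          - ∑ A ∈ s.powerset, (-1 : ℝ) ^ A.card := by
      rw [← Finset.sum_neg_distrib, ← Finset.sum_sub_distrib]
      refine Finset.sum_congr rfl fun A hA => ?_
      ring
    rw [h2, h3, ih, aux_alt, Finset.card_insert_of_notMem ha]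
    rcases eq_or_ne s ∅ with hs | hs
    · subst hs; simp
    · have h4 : s.card + 1 ≠ 1 := by
        have : s.card ≠ 0 := fun h => hs (Finset.card_eq_zero.mp h)
        omega
      rw [if_neg hs, if_neg h4]
      ring

lemma aux_core (n : ℕ) (c : ℝ) (S : Finset (Fin n)) :
    ∑ T ∈ Finset.univ.filter (fun T : Finset (Fin n) => S ⊆ T),
        (-1 : ℝ) ^ (T \ S).card * (1 - T.card * c)
    = (if S = Finset.univ then 1 - n * c else 0)
      + (if (Finset.univ \ S).card = 1 then c else 0) := by
  classical
  have hre : ∑ T ∈ Finset.univ.filter (fun T : Finset (Fin n) => S ⊆ T),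
      (-1 : ℝ) ^ (T \ S).card * (1 - T.card * c)
      = ∑ A ∈ (Finset.univ \ S).powerset,
        (-1 : ℝ) ^ A.card * (1 - (S.card + A.card) * c) := by
    refine Finset.sum_nbij' (fun T => T \ S) (fun A => S ∪ A) ?_ ?_ ?_ ?_ ?_
    · intro T hT
      rw [Finset.mem_filter] at hT
      exact Finset.mem_powerset.2 (Finset.sdiff_subset_sdiff (Finset.subset_univ T) le_rfl)
    · intro A hA
      exact Finset.mem_filter.2 ⟨Finset.mem_univ _, Finset.subset_union_left⟩
    · intro T hT
      rw [Finset.mem_filter] at hT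
      show S ∪ (T \ S) = T
      exact Finset.union_sdiff_of_subset hT.2
    · intro A hA
      rw [Finset.mem_powerset] at hA
      have hdisj : Disjoint S A := Finset.disjoint_left.mpr fun a haS haA =>
        (Finset.mem_sdiff.mp (hA haA)).2 haS
      show (S ∪ A) \ S = A
      exact Finset.union_sdiff_cancel_left hdisj
    · intro T hT
      rw [Finset.mem_filter] at hT
      have hle : S.card ≤ T.card := Finset.card_le_card hT.2
      have hcard : ((T.card : ℝ)) = (S.card : ℝ) + ((T \ S).card : ℝ) := by
        rw [Finset.card_sdiff_of_subset hT.2]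
        push_cast [Nat.cast_sub hle]
        ring
      show (-1 : ℝ) ^ (T \ S).card * (1 - T.card * c)
          = (-1 : ℝ) ^ (T \ S).card * (1 - ((S.card : ℝ) + ((T \ S).card : ℝ)) * c)
      rw [hcard]
  rw [hre]
  have hsplit : ∑ A ∈ (Finset.univ \ S).powerset,
      (-1 : ℝ) ^ A.card * (1 - (S.card + A.card) * c)
      = (1 - S.card * c) * (∑ A ∈ (Finset.univ \ S).powerset, (-1 : ℝ) ^ A.card)
        - c * (∑ A ∈ (Finset.univ \ S).powerset, (-1 : ℝ) ^ A.card * A.card) := by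
    rw [Finset.mul_sum, Finset.mul_sum, ← Finset.sum_sub_distrib]
    refine Finset.sum_congr rfl fun A hA => ?_
    ring
  rw [hsplit, aux_alt, aux_alt_card]
  have hempty : (Finset.univ \ S = ∅) ↔ S = Finset.univ := by
    constructor
    · intro h
      have := Finset.sdiff_eq_empty_iff_subset.mp h
      exact Finset.eq_univ_iff_forall.2 fun x => this (Finset.mem_univ x)
    · intro h; subst h; simp
  by_cases h1 : Finset.univ \ S = ∅
  · have hS : S = Finset.univ := hempty.mp h1
    have hc1 : (Finset.univ \ S).card ≠ 1 := by rw [h1]; simp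
    have hScard : (S.card : ℝ) = n := by subst hS; simp
    simp [h1, hc1, hS, hScard]
  · have hS : S ≠ Finset.univ := fun h => h1 (hempty.mpr h)
    by_cases h2 : (Finset.univ \ S).card = 1
    · simp [h1, h2, hS]
    · simp [h1, h2, hS]

/-- The Möbius transform of `y[S] = 1 - |S|ρ/(n-k+kρ)` vanishes on sets of size `≤ n-2`,
equals `ρ/(n-k+kρ)` on sets of size `n-1`, and `1 - nρ/(n-k+kρ)` on `[n]`; consequently the
moment matrix `M_n(y)` is positive semidefinite. -/
theorem mobius_transform_gap (n k : ℕ) (hn : 2 ≤ n) (hk1 : 1 ≤ k) (hkn : k ≤ n - 1)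
    (ρ : ℝ) (hρ0 : 0 < ρ) (hρ1 : ρ < 1)
    (y u : Finset (Fin n) → ℝ)
    (hy : ∀ S : Finset (Fin n), y S = 1 - S.card * ρ / (n - k + k * ρ))
    (hu : ∀ S : Finset (Fin n),
      u S = ∑ T ∈ Finset.univ.filter (fun T : Finset (Fin n) => S ⊆ T),
        (-1 : ℝ) ^ (T \ S).card * y T) :
    (∀ S : Finset (Fin n), S.card ≤ n - 2 → u S = 0) ∧
    (∀ S : Finset (Fin n), S.card = n - 1 → u S = ρ / (n - k + k * ρ)) ∧
    u Finset.univ = 1 - n * ρ / (n - k + k * ρ) ∧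
    (∀ S : Finset (Fin n), 0 ≤ u S) ∧
    (Matrix.of (fun S T : Finset (Fin n) => y (S ∪ T))).PosSemidef := by
  classical
  set d : ℝ := (n : ℝ) - k + k * ρ with hd
  set c : ℝ := ρ / d with hc
  have hkn' : k < n := by omega
  have hdpos : 0 < d := by
    have h1 : (k : ℝ) < n := by exact_mod_cast hkn'
    have h2 : (0 : ℝ) ≤ k * ρ := by positivity
    rw [hd]; linarith
  have hcpos : 0 < c := div_pos hρ0 hdpos
  have hone : 0 ≤ 1 - n * c := by
    have h1 : (k : ℝ) ≤ n := by exact_mod_cast hkn'.le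
    have hkey : (n : ℝ) * ρ ≤ d := by
      rw [hd]
      nlinarith [mul_nonneg (sub_nonneg.2 h1) (sub_pos.2 hρ1).le]
    rw [hc, sub_nonneg, ← mul_div_assoc, div_le_one hdpos]
    exact hkey
  -- rewrite y
  have hy' : ∀ S : Finset (Fin n), y S = 1 - S.card * c := by
    intro S
    rw [hy S, hc, mul_div_assoc]
  -- explicit value of u
  have hcard_compl : ∀ S : Finset (Fin n), (Finset.univ \ S).card = n - S.card := by
    intro S
    rw [Finset.card_sdiff_of_subset (Finset.subset_univ S), Finset.card_univ, Fintype.card_fin]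
  have huval : ∀ S : Finset (Fin n),
      u S = (if S = Finset.univ then 1 - n * c else 0)
        + (if (Finset.univ \ S).card = 1 then c else 0) := by
    intro S
    rw [hu S, ← aux_core n c S]
    refine Finset.sum_congr rfl fun T hT => ?_
    rw [hy' T]
  have hcardle : ∀ S : Finset (Fin n), S.card ≤ n := by
    intro S
    simpa using Finset.card_le_univ S
  have huniv_iff : ∀ S : Finset (Fin n), S = Finset.univ ↔ S.card = n := by
    intro S
    constructor
    · intro h; subst h; rw [Finset.card_univ, Fintype.card_fin]
    · intro h
      apply Finset.eq_univ_of_card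
      rw [h, Fintype.card_fin]
  -- part 1
  have part1 : ∀ S : Finset (Fin n), S.card ≤ n - 2 → u S = 0 := by
    intro S hS
    have h1 : S ≠ Finset.univ := by
      intro h
      rw [(huniv_iff S).mp h] at hS; omega
    have h2 : (Finset.univ \ S).card ≠ 1 := by
      rw [hcard_compl]; omega
    rw [huval S, if_neg h1, if_neg h2]; ring
  -- part 2
  have part2 : ∀ S : Finset (Fin n), S.card = n - 1 → u S = ρ / (↑n - ↑k + ↑k * ρ) := by
    intro S hS
    have h1 : S ≠ Finset.univ := by
      intro h
      rw [h] at hS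
      rw [Finset.card_univ, Fintype.card_fin] at hS
      omega
    have h2 : (Finset.univ \ S).card = 1 := by
      rw [hcard_compl, hS]; omega
    rw [huval S, if_neg h1, if_pos h2]
    rw [hc, hd]; ring
  -- part 3
  have part3 : u Finset.univ = 1 - ↑n * ρ / (↑n - ↑k + ↑k * ρ) := by
    have h2 : (Finset.univ \ (Finset.univ : Finset (Fin n))).card ≠ 1 := by
      simp
    rw [huval Finset.univ, if_pos rfl, if_neg h2, add_zero, hc, hd, mul_div_assoc]
  -- part 4
  have part4 : ∀ S : Finset (Fin n), 0 ≤ u S := by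
    intro S
    rw [huval S]
    have h1 : (0:ℝ) ≤ (if S = Finset.univ then 1 - n * c else 0) := by
      split_ifs
      · exact hone
      · exact le_rfl
    have h2 : (0:ℝ) ≤ (if (Finset.univ \ S).card = 1 then c else 0) := by
      split_ifs
      · exact le_of_lt hcpos
      · exact le_rfl
    linarith
  refine ⟨part1, part2, part3, part4, ?_⟩
  -- inversion: y W = ∑ over R ⊇ W of u R
  have hcount : ∀ W : Finset (Fin n),
      ((Finset.univ.filter (fun R : Finset (Fin n) => W ⊆ R)).filter
        (fun R => (Finset.univ \ R).card = 1)).card = n - W.card := by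
    intro W
    have himg : (Finset.univ.filter (fun R : Finset (Fin n) => W ⊆ R)).filter
        (fun R => (Finset.univ \ R).card = 1)
        = (Finset.univ \ W).image (fun a => Finset.univ.erase a) := by
      ext R
      simp only [Finset.mem_filter, Finset.mem_image, Finset.mem_univ, true_and,
        Finset.mem_sdiff]
      constructor
      · rintro ⟨hWR, hR1⟩
        obtain ⟨a, ha⟩ := Finset.card_eq_one.mp hR1
        refine ⟨a, ?_, ?_⟩
        · intro haW
          have : a ∈ Finset.univ \ R := ha ▸ Finset.mem_singleton_self a
          rw [Finset.mem_sdiff] at this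
          exact this.2 (hWR haW)
        · have : Finset.univ \ (Finset.univ \ R) = R := by
            rw [Finset.sdiff_sdiff_self_left]
            exact Finset.inter_eq_right.mpr (Finset.subset_univ R)
          rw [Finset.erase_eq, ← ha, this]
      · rintro ⟨a, haW, rfl⟩
        constructor
        · exact (Finset.subset_erase).mpr ⟨Finset.subset_univ W, haW⟩
        · rw [Finset.erase_eq, Finset.sdiff_sdiff_self_left,
            Finset.inter_eq_right.mpr (Finset.singleton_subset_iff.mpr (Finset.mem_univ a))]
          simp
    rw [himg, Finset.card_image_of_injOn, hcard_compl]
    intro a _ b _ hab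
    exact (Finset.erase_inj Finset.univ (Finset.mem_univ a)).mp hab
  have key : ∀ W : Finset (Fin n),
      y W = ∑ R : Finset (Fin n), (if W ⊆ R then u R else 0) := by
    intro W
    rw [← Finset.sum_filter]
    have hsum : ∑ R ∈ Finset.univ.filter (fun R : Finset (Fin n) => W ⊆ R), u R
        = (∑ R ∈ Finset.univ.filter (fun R : Finset (Fin n) => W ⊆ R),
            (if R = Finset.univ then 1 - n * c else 0))
          + ∑ R ∈ Finset.univ.filter (fun R : Finset (Fin n) => W ⊆ R),
            (if (Finset.univ \ R).card = 1 then c else 0) := by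
      rw [← Finset.sum_add_distrib]
      exact Finset.sum_congr rfl fun R _ => huval R
    have h1 : (∑ R ∈ Finset.univ.filter (fun R : Finset (Fin n) => W ⊆ R),
        (if R = Finset.univ then 1 - n * c else 0)) = 1 - n * c := by
      rw [Finset.sum_ite_eq' (Finset.univ.filter (fun R : Finset (Fin n) => W ⊆ R))
        (Finset.univ : Finset (Fin n)) (fun _ => 1 - n * c)]
      rw [if_pos]
      exact Finset.mem_filter.mpr ⟨Finset.mem_univ _, Finset.subset_univ W⟩
    have h2 : (∑ R ∈ Finset.univ.filter (fun R : Finset (Fin n) => W ⊆ R),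
        (if (Finset.univ \ R).card = 1 then c else 0)) = (n - W.card : ℕ) * c := by
      rw [← Finset.sum_filter, Finset.sum_const, hcount W, nsmul_eq_mul]
    rw [hsum, h1, h2, hy' W]
    have hWle : W.card ≤ n := hcardle W
    have : ((n - W.card : ℕ) : ℝ) = (n : ℝ) - W.card := by
      push_cast [Nat.cast_sub hWle]; ring
    rw [this]
    ring
  constructor
  · -- Hermitian
    ext S T
    simp only [Matrix.conjTranspose_apply, Matrix.of_apply, star_trivial]
    rw [Finset.union_comm]
  · intro x
    simp only [Matrix.mulVec, dotProduct, Matrix.of_apply, Pi.star_apply,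
      star_trivial]
    have expand : (∑ S : Finset (Fin n), x S * ∑ T : Finset (Fin n), y (S ∪ T) * x T)
        = ∑ R : Finset (Fin n),
            u R * (∑ S : Finset (Fin n), if S ⊆ R then x S else 0) ^ 2 := by
      have step1 : ∀ S : Finset (Fin n),
          x S * ∑ T : Finset (Fin n), y (S ∪ T) * x T
          = ∑ T : Finset (Fin n), ∑ R : Finset (Fin n),
              x S * ((if S ∪ T ⊆ R then u R else 0) * x T) := by
        intro S
        rw [Finset.mul_sum]
        refine Finset.sum_congr rfl fun T _ => ?_
        rw [key (S ∪ T), Finset.sum_mul, Finset.mul_sum]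
      calc ∑ S : Finset (Fin n), x S * ∑ T : Finset (Fin n), y (S ∪ T) * x T
          = ∑ S : Finset (Fin n), ∑ T : Finset (Fin n), ∑ R : Finset (Fin n),
              x S * ((if S ∪ T ⊆ R then u R else 0) * x T) := by
            exact Finset.sum_congr rfl fun S _ => step1 S
        _ = ∑ S : Finset (Fin n), ∑ R : Finset (Fin n), ∑ T : Finset (Fin n),
              x S * ((if S ∪ T ⊆ R then u R else 0) * x T) :=
            Finset.sum_congr rfl fun S _ => Finset.sum_comm
        _ = ∑ R : Finset (Fin n), ∑ S : Finset (Fin n), ∑ T : Finset (Fin n),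
              x S * ((if S ∪ T ⊆ R then u R else 0) * x T) := Finset.sum_comm
        _ = ∑ R : Finset (Fin n), ∑ S : Finset (Fin n), ∑ T : Finset (Fin n),
              u R * ((if S ⊆ R then x S else 0) * (if T ⊆ R then x T else 0)) := by
            refine Finset.sum_congr rfl fun R _ => Finset.sum_congr rfl fun S _ =>
              Finset.sum_congr rfl fun T _ => ?_
            by_cases h1 : S ⊆ R <;> by_cases h2 : T ⊆ R <;>
              simp [Finset.union_subset_iff, h1, h2] <;> ring
        _ = ∑ R : Finset (Fin n),
              u R * (∑ S : Finset (Fin n), if S ⊆ R then x S else 0) ^ 2 := by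
            refine Finset.sum_congr rfl fun R _ => ?_
            rw [sq, Finset.sum_mul_sum, Finset.mul_sum]
            refine Finset.sum_congr rfl fun S _ => ?_
            rw [Finset.mul_sum]
    have hx : (x.sum fun i xi => x.sum fun j xj => xi * y (i ∪ j) * xj)
        = ∑ S : Finset (Fin n), x S * ∑ T : Finset (Fin n), y (S ∪ T) * x T := by
      rw [Finsupp.sum_fintype _ _ (by simp)]
      refine Finset.sum_congr rfl fun S _ => ?_
      rw [Finsupp.sum_fintype _ _ (by simp), Finset.mul_sum]
      refine Finset.sum_congr rfl fun T _ => ?_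
      ring
    rw [hx, expand]
    exact Finset.sum_nonneg fun R _ => mul_nonneg (part4 R) (sq_nonneg _)
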